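/- Let N be a positive integer and γ ∈ ℂ with |γ| = 1. Let u be a generalised eigenvector associated with z ∈ ℂ with (u_0, u_1) = α ∈ ℂ² ∖ {0}. Then for every n ≥ 1, |S_{n+N}^γ(α, z) − S_n^γ(α, z)| ≤ ‖a_{n+2N−1}·X_{n+N}(z) − a_{n+N−1}·conj(a_{n+N−1}/a_{n−1})·conj(X_n(z))‖ · (|u_{n+N−1}|² + |u_{n+N}|²), where ‖·‖ is the operator norm on 2×2 complex matrices. -/

import Mathlib

open Filter Matrix Topology

noncomputable section

/-- The operator norm of a 2×2 complex matrix (as operator on Euclidean ℂ²). -/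
noncomputable def opNorm (X : Matrix (Fin 2) (Fin 2) ℂ) : ℝ :=
  ‖Matrix.toEuclideanCLM (𝕜 := ℂ) X‖

/-- Entrywise complex conjugation of a matrix. -/
def mconj (X : Matrix (Fin 2) (Fin 2) ℂ) : Matrix (Fin 2) (Fin 2) ℂ :=
  X.map (starRingEnd ℂ)

/-- Hermitian symmetrisation. -/
def symQ (X : Matrix (Fin 2) (Fin 2) ℂ) : Matrix (Fin 2) (Fin 2) ℂ :=
  (2⁻¹ : ℂ) • (X + Xᴴ)

def Ematrix : Matrix (Fin 2) (Fin 2) ℂ := !![0, -1; 1, 0]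

/-- One-step transfer matrix `B_j(z)`. -/
def Bmat (a b : ℕ → ℂ) (j : ℕ) (z : ℂ) : Matrix (Fin 2) (Fin 2) ℂ :=
  !![0, 1; -(a (j-1) / a j), (z - b j) / a j]

/-- `N`-step transfer matrix `X_n(z) = B_{n+N-1}(z) ⋯ B_n(z)`. -/
def transfer (a b : ℕ → ℂ) (N n : ℕ) (z : ℂ) : Matrix (Fin 2) (Fin 2) ℂ :=
  (((List.range N).map fun j => Bmat a b (n + j) z).reverse).prod

/-- Generalised eigenvector associated with `z`. -/
def IsGenEigen (a b : ℕ → ℂ) (z : ℂ) (u : ℕ → ℂ) : Prop :=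
  ¬(u 0 = 0 ∧ u 1 = 0) ∧
    ∀ n, 1 ≤ n → z * u n = a n * u (n+1) + b n * u n + a (n-1) * u (n-1)

/-- The twisted Stolz class `D̃₁(K, GL(2,ℂ))`. -/
def MemD1K (K : Set ℂ) (Y : ℕ → ℂ → Matrix (Fin 2) (Fin 2) ℂ) : Prop :=
  (∀ n, 1 ≤ n → ContinuousOn (Y n) K) ∧
  (∀ n, 1 ≤ n → ∀ z ∈ K, IsUnit (Y n z)) ∧
  (∃ C : ℝ, ∀ n, 1 ≤ n → ∀ z ∈ K, opNorm (Y n z) ≤ C) ∧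
  (∃ g : ℕ → ℝ, Summable g ∧ ∀ n, 1 ≤ n → ∀ z ∈ K,
      opNorm (Y (n+1) z - mconj (Y n z)) ≤ g n)

/-- The twisted Stolz class `D̃₁(ℂ)` for scalar sequences `(x_n : n ≥ 1)`. -/
def MemD1 (x : ℕ → ℂ) : Prop :=
  (∃ C : ℝ, ∀ n, 1 ≤ n → ‖x n‖ ≤ C) ∧
    Summable (fun n : ℕ => ‖x (n+2) - (starRingEnd ℂ) (x (n+1))‖)

def MemD1N (N : ℕ) (x : ℕ → ℂ) : Prop := ∀ i < N, MemD1 (fun n => x (n*N+i))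

/-- The quadratic form `v ↦ ⟨M v, v⟩`. -/
def Qform (M : Matrix (Fin 2) (Fin 2) ℂ) (v : Fin 2 → ℂ) : ℂ :=
  dotProduct (star v) (M.mulVec v)

def Qgam (a b : ℕ → ℂ) (N : ℕ) (γ : ℂ) (n : ℕ) (z : ℂ) (v : Fin 2 → ℂ) : ℂ :=
  Qform (symQ ((a (n+N-1) / (γ * (‖a (n+N-1)‖ : ℂ))) • (Ematrix * transfer a b N n z))) v

def Qtil (a b : ℕ → ℂ) (N : ℕ) (γ : ℂ) (n : ℕ) (z : ℂ) (v : Fin 2 → ℂ) : ℂ :=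
  Qform (symQ ((a (n+N-1) / (γ * (‖a (n+N-1)‖ : ℂ)) *
      (starRingEnd ℂ) (a (n+N-1) / a (n-1))) • (Ematrix * mconj (transfer a b N n z)))) v

/-- The `N`-shifted Turán determinant, expressed via a generalised eigenvector `u`. -/
def Sdet (a b : ℕ → ℂ) (N : ℕ) (γ : ℂ) (z : ℂ) (u : ℕ → ℂ) (n : ℕ) : ℂ :=
  (‖a (n+N-1)‖ : ℂ) * Qgam a b N γ n z ![u (n-1), u n]

/-- Uniform non-degeneracy of a family of quadratic forms. -/
def UnifNonDeg (K : Set ℂ) (Q : ℕ → ℂ → (Fin 2 → ℂ) → ℂ) : Prop :=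
  ∃ c₁ > (0:ℝ), ∃ c₂ > (0:ℝ), ∃ M : ℕ, 1 ≤ M ∧
    ∀ v : Fin 2 → ℂ, ∀ z ∈ K, ∀ n, M ≤ n →
      c₁ * (‖v 0‖^2 + ‖v 1‖^2) ≤ ‖Q n z v‖ ∧ ‖Q n z v‖ ≤ c₂ * (‖v 0‖^2 + ‖v 1‖^2)

def RealEntries (X : Matrix (Fin 2) (Fin 2) ℂ) : Prop := ∀ p q, (X p q).im = 0

def discr (X : Matrix (Fin 2) (Fin 2) ℂ) : ℂ := (Matrix.trace X)^2 - 4 * X.det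

/-- Periodic one-step matrix `𝔅_j(x)` (real). -/
def pB (α β : ℤ → ℝ) (j : ℤ) (x : ℝ) : Matrix (Fin 2) (Fin 2) ℝ :=
  !![0, 1; -(α (j-1) / α j), (x - β j) / α j]

/-- Periodic transfer matrix `𝔛_i(x) = 𝔅_{i+N-1}(x) ⋯ 𝔅_i(x)`. -/
def pX (α β : ℤ → ℝ) (N : ℕ) (i : ℤ) (x : ℝ) : Matrix (Fin 2) (Fin 2) ℝ :=
  (((List.range N).map fun j => pB α β (i + j) x).reverse).prod

/-- The generalised eigenvector with initial data `α`. -/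
def gev (a b : ℕ → ℂ) (z : ℂ) (α : Fin 2 → ℂ) : ℕ → ℂ
  | 0 => α 0
  | 1 => α 1
  | n+2 => ((z - b (n+1)) * gev a b z α (n+1) - a n * gev a b z α n) / a (n+1)

end


section Helpers
open Matrix

private lemma Qform_smul' (c : ℂ) (M : Matrix (Fin 2) (Fin 2) ℂ) (v : Fin 2 → ℂ) :
    Qform (c • M) v = c * Qform M v := by
  simp [Qform, Matrix.smul_mulVec, dotProduct_smul, smul_eq_mul]
  ring

private lemma Qform_sub' (M M' : Matrix (Fin 2) (Fin 2) ℂ) (v : Fin 2 → ℂ) :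
    Qform (M - M') v = Qform M v - Qform M' v := by
  simp [Qform, Matrix.sub_mulVec]
  ring

private lemma Qform_conjT' (M : Matrix (Fin 2) (Fin 2) ℂ) (v : Fin 2 → ℂ) :
    Qform Mᴴ v = (starRingEnd ℂ) (Qform M v) := by
  simp only [Qform, dotProduct, Matrix.mulVec, Fin.sum_univ_two,
    Matrix.conjTranspose_apply, Pi.star_apply, map_add, _root_.map_mul, Complex.star_def,
    Complex.conj_conj]
  ring

private lemma Qform_symQ' (M : Matrix (Fin 2) (Fin 2) ℂ) (v : Fin 2 → ℂ) :
    Qform (symQ M) v = 2⁻¹ * (Qform M v + (starRingEnd ℂ) (Qform M v)) := by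
  rw [symQ, Qform_smul']
  have : Qform (M + Mᴴ) v = Qform M v + Qform Mᴴ v := by
    simp [Qform, Matrix.add_mulVec]
    ring
  rw [this, Qform_conjT']

private lemma Qform_mulVec' (M X : Matrix (Fin 2) (Fin 2) ℂ) (v : Fin 2 → ℂ) :
    Qform M (X.mulVec v) = Qform (Xᴴ * M * X) v := by
  simp only [Qform, dotProduct, Matrix.mulVec, Matrix.mul_apply, Fin.sum_univ_two,
    Matrix.conjTranspose_apply, Pi.star_apply, map_add, _root_.map_mul, Complex.star_def]
  ring

private lemma XtE' (X : Matrix (Fin 2) (Fin 2) ℂ) :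
    Xᵀ * Ematrix * X = X.det • Ematrix := by
  ext i j
  fin_cases i <;> fin_cases j <;>
    simp [Ematrix, Matrix.mul_apply, Fin.sum_univ_two, Matrix.det_fin_two,
      Matrix.transpose_apply] <;> ring

private lemma XHEconj' (X : Matrix (Fin 2) (Fin 2) ℂ) :
    Xᴴ * Ematrix * mconj X = ((starRingEnd ℂ) X.det) • Ematrix := by
  have h1 : Xᴴ = (mconj X)ᵀ := by
    ext i j; simp [mconj, Matrix.conjTranspose_apply, Complex.star_def]
  rw [h1, XtE' (mconj X)]
  congr 1
  rw [Matrix.det_fin_two, Matrix.det_fin_two]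
  simp [mconj, map_sub, _root_.map_mul]

private lemma qform_norm_le' (M : Matrix (Fin 2) (Fin 2) ℂ) (v : Fin 2 → ℂ) :
    ‖Qform M v‖ ≤ opNorm M * (‖v 0‖^2 + ‖v 1‖^2) := by
  set T := Matrix.toEuclideanCLM (𝕜 := ℂ) M with hT
  set x : EuclideanSpace ℂ (Fin 2) := (WithLp.equiv 2 (Fin 2 → ℂ)).symm v with hx
  have hxnorm : ‖x‖^2 = ‖v 0‖^2 + ‖v 1‖^2 := by
    rw [EuclideanSpace.norm_eq, Real.sq_sqrt (by positivity)]
    simp [hx, Fin.sum_univ_two]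
  have hQ : Qform M v = inner ℂ x (T x) := by
    rw [hT, hx]
    have happ : ∀ i, (Matrix.toEuclideanCLM (𝕜 := ℂ) M ((WithLp.equiv 2 (Fin 2 → ℂ)).symm v)) i
        = M.mulVec v i := fun i => rfl
    rw [PiLp.inner_apply, Fin.sum_univ_two, happ, happ]
    simp only [Qform, dotProduct, Fin.sum_univ_two, RCLike.inner_apply,
      Pi.star_apply, starRingEnd_apply]
    exact congrArg₂ (· + ·) (mul_comm _ _) (mul_comm _ _)
  calc ‖Qform M v‖ = ‖(inner ℂ x (T x) : ℂ)‖ := by rw [hQ]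
    _ ≤ ‖x‖ * ‖T x‖ := norm_inner_le_norm x (T x)
    _ ≤ ‖x‖ * (‖T‖ * ‖x‖) := by gcongr; exact T.le_opNorm x
    _ = opNorm M * (‖v 0‖^2 + ‖v 1‖^2) := by rw [← hxnorm, opNorm]; ring

private lemma opNorm_E_le' : opNorm Ematrix ≤ 1 := by
  apply ContinuousLinearMap.opNorm_le_bound _ zero_le_one
  intro x
  rw [one_mul]
  have h : ∀ i, (Matrix.toEuclideanCLM (𝕜 := ℂ) Ematrix x) i =
      Ematrix.mulVec (WithLp.equiv 2 (Fin 2 → ℂ) x) i := fun i => rfl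
  rw [EuclideanSpace.norm_eq, EuclideanSpace.norm_eq]
  apply Real.sqrt_le_sqrt
  apply le_of_eq
  rw [Fin.sum_univ_two, Fin.sum_univ_two, h, h]
  simp [Ematrix, Matrix.mulVec, dotProduct, Fin.sum_univ_two]
  ring

private lemma opNorm_E_mul_le' (D : Matrix (Fin 2) (Fin 2) ℂ) :
    opNorm (Ematrix * D) ≤ opNorm D := by
  rw [opNorm, _root_.map_mul]
  calc ‖Matrix.toEuclideanCLM (𝕜 := ℂ) Ematrix * Matrix.toEuclideanCLM (𝕜 := ℂ) D‖
      ≤ ‖Matrix.toEuclideanCLM (𝕜 := ℂ) Ematrix‖ * ‖Matrix.toEuclideanCLM (𝕜 := ℂ) D‖ :=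
        norm_mul_le _ _
    _ ≤ 1 * opNorm D := by
        apply mul_le_mul opNorm_E_le' le_rfl (norm_nonneg _) zero_le_one
    _ = opNorm D := one_mul _

private lemma transfer_zero' (a b : ℕ → ℂ) (n : ℕ) (z : ℂ) : transfer a b 0 n z = 1 := by
  simp [transfer]

private lemma transfer_succ' (a b : ℕ → ℂ) (N n : ℕ) (z : ℂ) :
    transfer a b (N+1) n z = Bmat a b (n+N) z * transfer a b N n z := by
  simp [transfer, List.range_succ]

private lemma Bmat_mulVec' (a b : ℕ → ℂ) (ha : ∀ n, a n ≠ 0) (z : ℂ) (u : ℕ → ℂ)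
    (hu : ∀ n, 1 ≤ n → z * u n = a n * u (n+1) + b n * u n + a (n-1) * u (n-1))
    (m : ℕ) :
    (Bmat a b (m+1) z).mulVec ![u m, u (m+1)] = ![u (m+1), u (m+2)] := by
  have h := hu (m+1) (Nat.le_add_left 1 m)
  simp only [Nat.add_sub_cancel] at h
  funext i
  fin_cases i
  · simp [Bmat, Matrix.mulVec, dotProduct, Fin.sum_univ_two]
  · simp only [Bmat, Matrix.mulVec, dotProduct, Fin.sum_univ_two]
    show -(a ((m+1)-1) / a (m+1)) * u m + (z - b (m+1)) / a (m+1) * u (m+1) = u (m+2)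
    simp only [Nat.add_sub_cancel]
    have hmm : m + 1 + 1 = m + 2 := rfl
    rw [hmm] at h
    have h2 : u (m+2) = ((z - b (m+1)) * u (m+1) - a m * u m) / a (m+1) := by
      rw [eq_div_iff (ha (m+1))]; linear_combination (-1 : ℂ) * h
    rw [h2]
    field_simp
    ring

private lemma transfer_mulVec' (a b : ℕ → ℂ) (ha : ∀ n, a n ≠ 0) (z : ℂ) (u : ℕ → ℂ)
    (hu : ∀ n, 1 ≤ n → z * u n = a n * u (n+1) + b n * u n + a (n-1) * u (n-1))
    (N m : ℕ) :
    (transfer a b N (m+1) z).mulVec ![u m, u (m+1)] = ![u (m+N), u (m+N+1)] := by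
  induction N with
  | zero => simp [transfer_zero']
  | succ N ih =>
      rw [transfer_succ', ← Matrix.mulVec_mulVec, ih]
      have : m + 1 + N = (m + N) + 1 := by omega
      rw [this, Bmat_mulVec' a b ha z u hu (m+N)]
      congr 1 <;> omega

private lemma Bmat_det' (a b : ℕ → ℂ) (z : ℂ) (j : ℕ) :
    (Bmat a b j z).det = a (j-1) / a j := by
  simp [Bmat, Matrix.det_fin_two_of]

private lemma transfer_det' (a b : ℕ → ℂ) (ha : ∀ n, a n ≠ 0) (z : ℂ) (N m : ℕ) :
    (transfer a b N (m+1) z).det = a m / a (m+N) := by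
  induction N with
  | zero => rw [transfer_zero']; simp [div_self (ha m)]
  | succ N ih =>
      rw [transfer_succ', Matrix.det_mul, ih, Bmat_det' a b]
      have : m + 1 + N - 1 = m + N := by omega
      rw [this]
      have h1 := ha (m+N)
      have h2 := ha (m+1+N)
      have h3 : m + 1 + N = m + (N+1) := by omega
      rw [h3] at h2 ⊢
      field_simp

end Helpers

open Filter Matrix Topology in
/-- Lemma 1: the increment bound for shifted Turán determinants. -/
theorem statement7
    (a b : ℕ → ℂ) (ha : ∀ n, a n ≠ 0)
    (N : ℕ) (hN : 1 ≤ N) (γ : ℂ) (hγ : ‖γ‖ = 1)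
    (z : ℂ) (u : ℕ → ℂ) (hu : IsGenEigen a b z u)
    (n : ℕ) (hn : 1 ≤ n) :
    ‖Sdet a b N γ z u (n+N) - Sdet a b N γ z u n‖ ≤
      opNorm (a (n+2*N-1) • transfer a b N (n+N) z -
          (a (n+N-1) * (starRingEnd ℂ) (a (n+N-1) / a (n-1))) •
            mconj (transfer a b N n z)) *
        (‖u (n+N-1)‖^2 + ‖u (n+N)‖^2) := by
  obtain ⟨hα, hrec⟩ := hu
  obtain ⟨m, rfl⟩ : ∃ m, n = m + 1 := ⟨n - 1, (Nat.succ_pred_eq_of_pos hn).symm⟩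
  have hγ0 : γ ≠ 0 := by intro h; rw [h] at hγ; simp at hγ
  have e1 : m + 1 + N - 1 = m + N := by omega
  have e2 : m + 1 + 2 * N - 1 = m + 2 * N := by omega
  have e3 : m + 1 + N = m + N + 1 := by omega
  have e4 : m + 1 - 1 = m := by omega
  have e5 : m + N + 1 + N - 1 = m + 2 * N := by omega
  have e6 : m + N + 1 - 1 = m + N := by omega
  rw [e1, e2, e3, e4]
  set X₁ := transfer a b N (m+1) z with hX₁
  set X₂ := transfer a b N (m+N+1) z with hX₂
  set v₁ : Fin 2 → ℂ := ![u m, u (m+1)] with hv₁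
  set w : Fin 2 → ℂ := ![u (m+N), u (m+N+1)] with hw
  set r₁ := Qform (Ematrix * X₁) v₁ with hr₁
  set r₂ := Qform (Ematrix * X₂) w with hr₂
  set r₃ := Qform (Ematrix * mconj X₁) w with hr₃
  set d := a (m+N) * (starRingEnd ℂ) (a (m+N) / a m) with hd
  have hmv : X₁.mulVec v₁ = w := by
    rw [hX₁, hv₁, hw, transfer_mulVec' a b ha z u hrec N m]
  have hdet : X₁.det = a m / a (m+N) := transfer_det' a b ha z N m
  have h3 : r₃ = (starRingEnd ℂ) (a m / a (m+N)) * r₁ := by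
    rw [hr₃, ← hmv, Qform_mulVec']
    have hmm : X₁ᴴ * (Ematrix * mconj X₁) * X₁
        = ((starRingEnd ℂ) X₁.det) • (Ematrix * X₁) := by
      rw [← mul_assoc, XHEconj', smul_mul_assoc]
    rw [hmm, Qform_smul', hdet, hr₁]
  have hA1 : (‖a (m+N)‖ : ℂ) ≠ 0 := by
    simpa using norm_ne_zero_iff.mpr (ha (m+N))
  have hA2 : (‖a (m+2*N)‖ : ℂ) ≠ 0 := by
    simpa using norm_ne_zero_iff.mpr (ha (m+2*N))
  have hA1' : ((‖a (m+N)‖ : ℝ) : ℂ) ≠ 0 := by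
    simpa [Complex.ofReal_ne_zero] using norm_ne_zero_iff.mpr (ha (m+N))
  have hA2' : ((‖a (m+2*N)‖ : ℝ) : ℂ) ≠ 0 := by
    simpa [Complex.ofReal_ne_zero] using norm_ne_zero_iff.mpr (ha (m+2*N))
  have hcc : (starRingEnd ℂ) (a (m+N) / a m) * (starRingEnd ℂ) (a m / a (m+N)) = 1 := by
    rw [← _root_.map_mul]
    have : a (m+N) / a m * (a m / a (m+N)) = 1 := by
      rw [div_mul_div_comm, mul_comm (a (m+N)) (a m),
        div_self (mul_ne_zero (ha m) (ha (m+N)))]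
    rw [this, _root_.map_one]
  have hS1 : Sdet a b N γ z u (m+1)
      = 2⁻¹ * (γ⁻¹ * (d * r₃) + (starRingEnd ℂ) (γ⁻¹ * (d * r₃))) := by
    have hu1 : Sdet a b N γ z u (m+1)
        = (‖a (m+N)‖ : ℂ) * Qform (symQ ((a (m+N) / (γ * (‖a (m+N)‖ : ℂ))) •
            (Ematrix * X₁))) v₁ := by
      rw [Sdet, Qgam, e1, e4, hX₁, hv₁]
    rw [hu1, Qform_symQ', Qform_smul', ← hr₁]
    have key : (‖a (m+N)‖ : ℂ) * (a (m+N) / (γ * (‖a (m+N)‖ : ℂ)) * r₁)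
        = γ⁻¹ * (d * r₃) := by
      rw [h3, hd]
      have lhs_eq : (‖a (m+N)‖ : ℂ) * (a (m+N) / (γ * (‖a (m+N)‖ : ℂ)) * r₁)
          = γ⁻¹ * (a (m+N) * r₁) := by
        field_simp [hγ0, hA1']
      rw [lhs_eq]
      linear_combination (-(γ⁻¹ * a (m+N) * r₁)) * hcc
    have key2 := congrArg (starRingEnd ℂ) key
    rw [_root_.map_mul, Complex.conj_ofReal] at key2
    linear_combination 2⁻¹ * key + 2⁻¹ * key2
  have hS2 : Sdet a b N γ z u (m+N+1)
      = 2⁻¹ * (γ⁻¹ * (a (m+2*N) * r₂) + (starRingEnd ℂ) (γ⁻¹ * (a (m+2*N) * r₂))) := by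
    have hu2 : Sdet a b N γ z u (m+N+1)
        = (‖a (m+2*N)‖ : ℂ) * Qform (symQ ((a (m+2*N) / (γ * (‖a (m+2*N)‖ : ℂ))) •
            (Ematrix * X₂))) w := by
      rw [Sdet, Qgam, e5, e6, hX₂, hw]
    rw [hu2, Qform_symQ', Qform_smul', ← hr₂]
    have key : (‖a (m+2*N)‖ : ℂ) * (a (m+2*N) / (γ * (‖a (m+2*N)‖ : ℂ)) * r₂)
        = γ⁻¹ * (a (m+2*N) * r₂) := by
      field_simp [hγ0, hA2']
    have key2 := congrArg (starRingEnd ℂ) key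
    rw [_root_.map_mul, Complex.conj_ofReal] at key2
    linear_combination 2⁻¹ * key + 2⁻¹ * key2
  set D := a (m+2*N) • X₂ - d • mconj X₁ with hD
  set x := γ⁻¹ * Qform (Ematrix * D) w with hx
  have hQD : Qform (Ematrix * D) w = a (m+2*N) * r₂ - d * r₃ := by
    rw [hD, mul_sub, mul_smul_comm, mul_smul_comm, Qform_sub', Qform_smul', Qform_smul',
      ← hr₂, ← hr₃]
  have hdiff : Sdet a b N γ z u (m+N+1) - Sdet a b N γ z u (m+1)
      = 2⁻¹ * (x + (starRingEnd ℂ) x) := by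
    rw [hS1, hS2]
    have hx' : x = γ⁻¹ * (a (m+2*N) * r₂) - γ⁻¹ * (d * r₃) := by
      rw [hx, hQD]; ring
    rw [hx', map_sub]
    ring
  rw [hdiff]
  calc ‖2⁻¹ * (x + (starRingEnd ℂ) x)‖
      = 2⁻¹ * ‖x + (starRingEnd ℂ) x‖ := by
        rw [norm_mul]; norm_num
    _ ≤ 2⁻¹ * (‖x‖ + ‖(starRingEnd ℂ) x‖) := by
        have := norm_add_le x ((starRingEnd ℂ) x)
        nlinarith [norm_nonneg x]
    _ = ‖x‖ := by rw [RCLike.norm_conj]; ring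
    _ = ‖Qform (Ematrix * D) w‖ := by
        rw [hx, norm_mul, norm_inv, hγ]; norm_num
    _ ≤ opNorm (Ematrix * D) * (‖w 0‖^2 + ‖w 1‖^2) := qform_norm_le' _ _
    _ ≤ opNorm D * (‖w 0‖^2 + ‖w 1‖^2) := by
        apply mul_le_mul_of_nonneg_right (opNorm_E_mul_le' D)
        positivity
    _ = opNorm D * (‖u (m+N)‖^2 + ‖u (m+N+1)‖^2) := by
        rw [hw]
        simp [Matrix.cons_val_zero, Matrix.cons_val_one, Matrix.head_cons]
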